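/- For every integer k ≥ 0, every β ∈ ℝ and every α ∈ (−π/2, π/2), one has ∫₀^{2cos α} ( e^{iβ} + t e^{i(β+π+α)} )^k dt = ((−1)^k / (k+1)) · e^{ikβ} · ( e^{i(2k+1)α} + (−1)^k e^{−iα} ). Equivalently, the unattenuated X-ray transform of z^k in fan-beam coordinates is I[z^k](β,α) = ((−1)^k/(k+1)) e^{ikβ}(e^{i(2k+1)α} + (−1)^k e^{−iα}). -/
import Mathlib


open MeasureTheory Set

noncomputable section

/-- Point at parameter `t` along the chord entering the disc at `e^{iβ}` in direction
`e^{i(β+π+α)}` (fan-beam coordinates). -/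
def pt (β α t : ℝ) : ℂ :=
  Complex.exp (Complex.I * β) + t * Complex.exp (Complex.I * (β + Real.pi + α))

/-- For every `k ≥ 0`, `β ∈ ℝ` and `α ∈ (-π/2, π/2)`,
`∫₀^{2cos α} (e^{iβ} + t e^{i(β+π+α)})^k dt
  = ((-1)^k/(k+1)) e^{ikβ} (e^{i(2k+1)α} + (-1)^k e^{-iα})`,
i.e. the unattenuated X-ray transform of `z^k` in fan-beam coordinates. -/
theorem statement8 (k : ℕ) (β α : ℝ) (hα : α ∈ Ioo (-(Real.pi / 2)) (Real.pi / 2)) :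
    ∫ t in (0:ℝ)..(2 * Real.cos α), (pt β α t) ^ k =
      ((-1 : ℂ) ^ k / ((k : ℂ) + 1)) * Complex.exp (Complex.I * k * β) *
        (Complex.exp (Complex.I * (2 * k + 1) * α)
          + (-1 : ℂ) ^ k * Complex.exp (-(Complex.I * α))) := by
  set a : ℂ := Complex.exp (Complex.I * β) with ha
  set d : ℂ := Complex.exp (Complex.I * (β + Real.pi + α)) with hd
  have hdne : d ≠ 0 := Complex.exp_ne_zero _
  have hkne : ((k : ℂ) + 1) ≠ 0 := by
    exact_mod_cast (Nat.cast_add_one_ne_zero k : ((k : ℂ) + 1) ≠ 0)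
  -- Step 1: compute the integral via an antiderivative
  have hstep : ∫ t in (0:ℝ)..(2 * Real.cos α), (pt β α t) ^ k =
      ((a + (2 * Real.cos α : ℝ) * d) ^ (k+1) - a ^ (k+1)) / (((k : ℂ) + 1) * d) := by
    have hderiv : ∀ t ∈ uIcc (0:ℝ) (2 * Real.cos α),
        HasDerivAt (fun t : ℝ => (a + (t : ℂ) * d) ^ (k+1) / (((k : ℂ) + 1) * d))
          ((pt β α t) ^ k) t := by
      intro t _
      have h1 : HasDerivAt (fun t : ℝ => a + (t : ℂ) * d) d t := by
        simpa using (Complex.ofRealCLM.hasDerivAt.mul_const d).const_add a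
      have hpow := (hasDerivAt_pow (k+1) (a + (t : ℂ) * d)).comp t h1
      have h2 := hpow.div_const (((k : ℂ) + 1) * d)
      simp only [Function.comp] at h2
      have heq : ((↑(k + 1) : ℂ) * (a + (t : ℂ) * d) ^ (k + 1 - 1) * d) /
          (((k : ℂ) + 1) * d) = (pt β α t) ^ k := by
        rw [pt]
        push_cast
        field_simp
        ring
      rw [heq] at h2
      exact h2
    have hint : IntervalIntegrable (fun t : ℝ => (pt β α t) ^ k) volume 0 (2 * Real.cos α) := by
      apply Continuous.intervalIntegrable
      unfold pt
      fun_prop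
    have := intervalIntegral.integral_eq_sub_of_hasDerivAt hderiv hint
    rw [this]
    push_cast
    ring
  rw [hstep]
  -- Step 2: algebra with exponentials
  set X : ℂ := Complex.exp (Complex.I * α) with hX
  have hXne : X ≠ 0 := Complex.exp_ne_zero _
  have hane : a ≠ 0 := Complex.exp_ne_zero _
  have hdX : d = -(a * X) := by
    rw [hd, ha, hX]
    have : Complex.I * ((β : ℂ) + Real.pi + α) =
        Complex.I * β + Real.pi * Complex.I + Complex.I * α := by ring
    rw [this, Complex.exp_add, Complex.exp_add, Complex.exp_pi_mul_I]
    ring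
  have hcos : ((2 * Real.cos α : ℝ) : ℂ) = X + X⁻¹ := by
    push_cast
    rw [Complex.cos, hX, ← Complex.exp_neg]
    ring_nf
  have hXinv : Complex.exp (-(Complex.I * α)) = X⁻¹ := by
    rw [hX, ← Complex.exp_neg]
  have hchord : a + ((2 * Real.cos α : ℝ) : ℂ) * d = -(a * X ^ 2) := by
    rw [hcos, hdX]
    have hXX : X * X⁻¹ = 1 := mul_inv_cancel₀ hXne
    field_simp
    ring
  rw [hchord, hXinv, hdX]
  have hkb : Complex.exp (Complex.I * k * β) = a ^ k := by
    rw [ha, ← Complex.exp_nat_mul]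
    ring_nf
  have hka : Complex.exp (Complex.I * (2 * k + 1) * α) = X ^ (2 * k + 1) := by
    rw [hX, ← Complex.exp_nat_mul]
    push_cast
    ring_nf
  rw [hkb, hka]
  have h1 : (-(a * X ^ 2)) ^ (k + 1) = (-1 : ℂ) ^ (k+1) * a ^ (k+1) * X ^ (2*(k+1)) := by
    rw [neg_pow, pow_mul]
    ring
  rw [h1]
  have hm1 : (-1 : ℂ) ^ (k * 2) = 1 := by
    rw [mul_comm]; exact Even.neg_one_pow (even_two_mul k)
  field_simp
  rw [pow_succ, pow_succ]
  ring_nf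
  rw [hm1]
  ring
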